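/- (Recursion inequality (18) in Theorem 3) Let ω ∈ (0,2) and θ ≥ 0 be such that δ = 2θ/ω + ((2−ω)/ω)·minᵢ Dᵢᵢ > 0. Let x* be a global minimizer of f, let z be a triangle-proximal point of x, suppose ‖x‖ ≤ R and ‖x*‖ ≤ R, and suppose the error bound ‖x − x*‖ ≤ η·‖x − z‖ holds for some constant η > 0. Then f(z) − f(x*) ≤ C₃·√(f(x) − f(z)) + C₄·(f(x) − f(z)), where C₃ = 2R‖C‖·√(2/δ) and C₄ = (2/δ)·(‖C‖ + (η² + 1)‖A‖). -/

import Mathlib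

open scoped RealInnerProductSpace
open Matrix Filter

noncomputable section

/-- Euclidean space ℝⁿ. -/
abbrev E (n : ℕ) := EuclideanSpace ℝ (Fin n)

/-- Matrix-vector multiplication, valued in Euclidean space. -/
def mulVecE {n : ℕ} (M : Matrix (Fin n) (Fin n) ℝ) (x : E n) : E n :=
  (WithLp.equiv 2 (Fin n → ℝ)).symm (M.mulVec ((WithLp.equiv 2 (Fin n → ℝ)) x))

/-- Operator (spectral) norm of a matrix. -/
def opNorm {n : ℕ} (M : Matrix (Fin n) (Fin n) ℝ) : ℝ :=
  ‖Matrix.toEuclideanCLM (𝕜 := ℝ) M‖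

/-- The diagonal part `D` of `A`. -/
def Dmat {n : ℕ} (A : Matrix (Fin n) (Fin n) ℝ) : Matrix (Fin n) (Fin n) ℝ :=
  Matrix.diagonal fun i => A i i

/-- The strictly lower triangular part `L` of `A`. -/
def Lmat {n : ℕ} (A : Matrix (Fin n) (Fin n) ℝ) : Matrix (Fin n) (Fin n) ℝ :=
  Matrix.of fun i j => if (j : ℕ) < (i : ℕ) then A i j else 0

/-- `B = L + (1/ω)(D + θI)`. -/
def Bmat {n : ℕ} (ω θ : ℝ) (A : Matrix (Fin n) (Fin n) ℝ) : Matrix (Fin n) (Fin n) ℝ :=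
  Lmat A + ω⁻¹ • (Dmat A + θ • (1 : Matrix (Fin n) (Fin n) ℝ))

/-- `C = Lᵀ + (1/ω)((ω−1)D − θI)`. -/
def Cmat {n : ℕ} (ω θ : ℝ) (A : Matrix (Fin n) (Fin n) ℝ) : Matrix (Fin n) (Fin n) ℝ :=
  (Lmat A)ᵀ + ω⁻¹ • ((ω - 1) • Dmat A - θ • (1 : Matrix (Fin n) (Fin n) ℝ))

/-- `v` is a subgradient of `h` at `z`. -/
def IsSubgradient {n : ℕ} (h : E n → ℝ) (v z : E n) : Prop :=
  ∀ y, h z + ⟪v, y - z⟫ ≤ h y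

/-- The composite objective `f(x) = (1/2)⟨x, Ax⟩ + ⟨b, x⟩ + h(x)`. -/
def fObj {n : ℕ} (A : Matrix (Fin n) (Fin n) ℝ) (b : E n) (h : E n → ℝ) (x : E n) : ℝ :=
  (1/2) * ⟪x, mulVecE A x⟫ + ⟪b, x⟫ + h x

/-- `z` is a triangle-proximal point of `x`: there is a subgradient `v` of `h` at `z`
with `Bz + b + Cx + v = 0`. -/
def IsTriangleProx {n : ℕ} (ω θ : ℝ) (A : Matrix (Fin n) (Fin n) ℝ) (b : E n)
    (h : E n → ℝ) (x z : E n) : Prop :=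
  ∃ v, IsSubgradient h v z ∧
    mulVecE (Bmat ω θ A) z + b + mulVecE (Cmat ω θ A) x + v = 0
/- ===== auxiliary lemmas ===== -/

lemma mulVecE_eq {n : ℕ} (M : Matrix (Fin n) (Fin n) ℝ) (x : E n) :
    mulVecE M x = Matrix.toEuclideanCLM (𝕜 := ℝ) M x := by
  rfl

lemma WithLp_equiv_sub {n : ℕ} (x y : E n) :
    WithLp.equiv 2 (Fin n → ℝ) (x - y) = WithLp.equiv 2 (Fin n → ℝ) x - WithLp.equiv 2 (Fin n → ℝ) y :=
  rfl

lemma norm_mulVecE_le {n : ℕ} (M : Matrix (Fin n) (Fin n) ℝ) (x : E n) :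
    ‖mulVecE M x‖ ≤ opNorm M * ‖x‖ := by
  rw [mulVecE_eq]; exact (Matrix.toEuclideanCLM (𝕜 := ℝ) M).le_opNorm x

lemma inner_dot {n : ℕ} (u v : E n) :
    ⟪u, v⟫ = (WithLp.equiv 2 (Fin n → ℝ) u) ⬝ᵥ (WithLp.equiv 2 (Fin n → ℝ) v) := by
  simp [PiLp.inner_apply, dotProduct, RCLike.inner_apply, mul_comm]

lemma inner_mulVecE {n : ℕ} (M : Matrix (Fin n) (Fin n) ℝ) (u v : E n) :
    ⟪u, mulVecE M v⟫
      = (WithLp.equiv 2 (Fin n → ℝ) u) ⬝ᵥ M *ᵥ (WithLp.equiv 2 (Fin n → ℝ) v) := by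
  rw [inner_dot]; rfl

lemma A_decomp {n : ℕ} (A : Matrix (Fin n) (Fin n) ℝ) (hA : A.IsSymm) :
    Lmat A + Dmat A + (Lmat A)ᵀ = A := by
  ext i j
  have hs : A j i = A i j := congrFun (congrFun hA i) j
  simp only [Matrix.add_apply, Lmat, Dmat, Matrix.transpose_apply, Matrix.of_apply,
    Matrix.diagonal_apply]
  rcases lt_trichotomy (i : ℕ) (j : ℕ) with hij | hij | hij
  · have h1 : ¬ (j:ℕ) < (i:ℕ) := by omega
    have hne : i ≠ j := fun e => by omega
    simp [h1, hij, hne, hs]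
  · have : i = j := Fin.ext hij
    subst this
    simp
  · have h1 : ¬ (i:ℕ) < (j:ℕ) := by omega
    have hne : i ≠ j := fun e => by omega
    simp [h1, hij, hne]

lemma BC_sum {n : ℕ} (A : Matrix (Fin n) (Fin n) ℝ) (hA : A.IsSymm) {ω : ℝ} (θ : ℝ)
    (hω : ω ≠ 0) : Bmat ω θ A + Cmat ω θ A = A := by
  have h1 : Bmat ω θ A + Cmat ω θ A = (Lmat A + (Lmat A)ᵀ) + ω⁻¹ • (ω • Dmat A) := by
    rw [Bmat, Cmat]; module
  rw [h1, smul_smul, inv_mul_cancel₀ hω, one_smul]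
  calc Lmat A + (Lmat A)ᵀ + Dmat A = Lmat A + Dmat A + (Lmat A)ᵀ := by abel
    _ = A := A_decomp A hA

lemma BmC {n : ℕ} (A : Matrix (Fin n) (Fin n) ℝ) (ω θ : ℝ) :
    Bmat ω θ A - Cmat ω θ A
      = (Lmat A - (Lmat A)ᵀ)
        + ω⁻¹ • ((2 - ω) • Dmat A + (2*θ) • (1 : Matrix (Fin n) (Fin n) ℝ)) := by
  rw [Bmat, Cmat]; module

lemma swapA {n : ℕ} (A : Matrix (Fin n) (Fin n) ℝ) (hA : A.IsSymm) (p q : Fin n → ℝ) :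
    p ⬝ᵥ (A *ᵥ q) = q ⬝ᵥ (A *ᵥ p) := by
  calc p ⬝ᵥ (A *ᵥ q) = (p ᵥ* A) ⬝ᵥ q := Matrix.dotProduct_mulVec _ _ _
    _ = (A *ᵥ p) ⬝ᵥ q := by rw [← Matrix.vecMul_transpose, hA]
    _ = q ⬝ᵥ (A *ᵥ p) := dotProduct_comm _ _

lemma skew {n : ℕ} (A : Matrix (Fin n) (Fin n) ℝ) (w : Fin n → ℝ) :
    w ⬝ᵥ ((Lmat A)ᵀ *ᵥ w) = w ⬝ᵥ (Lmat A *ᵥ w) := by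
  rw [Matrix.dotProduct_mulVec, Matrix.vecMul_transpose, dotProduct_comm]

lemma qf_lb {n : ℕ} (hn : 0 < n) (A : Matrix (Fin n) (Fin n) ℝ) {ω θ δ : ℝ}
    (hω : ω ∈ Set.Ioo (0:ℝ) 2)
    (hδ : δ = 2 * θ / ω + (2 - ω) / ω * ⨅ i, A i i) (w : Fin n → ℝ) :
    δ * (w ⬝ᵥ w) ≤ w ⬝ᵥ ((Bmat ω θ A - Cmat ω θ A) *ᵥ w) := by
  haveI : Nonempty (Fin n) := ⟨⟨0, hn⟩⟩
  obtain ⟨hω0, hω2⟩ := hω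
  have hdiag : w ⬝ᵥ (Dmat A *ᵥ w) = ∑ i, A i i * (w i * w i) := by
    simp [Dmat, dotProduct, Matrix.mulVec_diagonal]
    exact Finset.sum_congr rfl fun i _ => by ring
  have hone : w ⬝ᵥ ((1 : Matrix (Fin n) (Fin n) ℝ) *ᵥ w) = w ⬝ᵥ w := by
    rw [Matrix.one_mulVec]
  set m := ⨅ i, A i i with hm
  have hsum : m * (w ⬝ᵥ w) ≤ ∑ i, A i i * (w i * w i) := by
    rw [dotProduct, Finset.mul_sum]
    refine Finset.sum_le_sum fun i _ => ?_
    exact mul_le_mul_of_nonneg_right (ciInf_le (Finite.bddBelow_range _) i) (mul_self_nonneg _)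
  have hS : 0 ≤ w ⬝ᵥ w := Finset.sum_nonneg fun i _ => mul_self_nonneg _
  rw [BmC, Matrix.add_mulVec, Matrix.sub_mulVec, Matrix.smul_mulVec, Matrix.add_mulVec,
    Matrix.smul_mulVec, Matrix.smul_mulVec, dotProduct_add, dotProduct_sub,
    dotProduct_smul, dotProduct_add, dotProduct_smul, dotProduct_smul, skew, hdiag, hone]
  have h1 : δ * (w ⬝ᵥ w) = ω⁻¹ * ((2-ω) * (m * (w ⬝ᵥ w)) + 2*θ*(w ⬝ᵥ w)) := by
    rw [hδ]; field_simp; ring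
  rw [h1]
  have h2 : (2-ω) * (m * (w ⬝ᵥ w)) ≤ (2-ω) * ∑ i, A i i * (w i * w i) :=
    mul_le_mul_of_nonneg_left hsum (by linarith)
  have h3 : (0:ℝ) ≤ ω⁻¹ := by positivity
  simp only [smul_eq_mul]
  nlinarith [mul_le_mul_of_nonneg_left h2 h3]

lemma id1 {n : ℕ} (B C : Matrix (Fin n) (Fin n) ℝ) (x z bb : Fin n → ℝ)
    (hsw : z ⬝ᵥ (B *ᵥ x) + z ⬝ᵥ (C *ᵥ x) = x ⬝ᵥ (B *ᵥ z) + x ⬝ᵥ (C *ᵥ z)) :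
    (1/2) * (x ⬝ᵥ ((B + C) *ᵥ x)) - (1/2) * (z ⬝ᵥ ((B + C) *ᵥ z)) + bb ⬝ᵥ (x - z)
      - (B *ᵥ z + bb + C *ᵥ x) ⬝ᵥ (x - z)
      = (1/2) * ((x - z) ⬝ᵥ ((B - C) *ᵥ (x - z))) := by
  simp only [Matrix.add_mulVec, Matrix.sub_mulVec, Matrix.mulVec_sub, dotProduct_add,
    dotProduct_sub, add_dotProduct, sub_dotProduct,
    show ∀ (M : Matrix (Fin n) (Fin n) ℝ) (p q : Fin n → ℝ), (M *ᵥ q) ⬝ᵥ p = p ⬝ᵥ (M *ᵥ q)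
      from fun M p q => dotProduct_comm _ _]
  linear_combination (1/2) * hsw

lemma id2 {n : ℕ} (B C : Matrix (Fin n) (Fin n) ℝ) (x z u bb : Fin n → ℝ)
    (hsw : u ⬝ᵥ (B *ᵥ z) + u ⬝ᵥ (C *ᵥ z) = z ⬝ᵥ (B *ᵥ u) + z ⬝ᵥ (C *ᵥ u)) :
    (1/2) * (z ⬝ᵥ ((B + C) *ᵥ z)) - (1/2) * (u ⬝ᵥ ((B + C) *ᵥ u)) + bb ⬝ᵥ (z - u)
      + (B *ᵥ z + bb + C *ᵥ x) ⬝ᵥ (u - z)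
      = (C *ᵥ (z - x)) ⬝ᵥ (z - u) - (1/2) * ((u - z) ⬝ᵥ ((B + C) *ᵥ (u - z))) := by
  simp only [Matrix.add_mulVec, Matrix.sub_mulVec, Matrix.mulVec_sub, dotProduct_add,
    dotProduct_sub, add_dotProduct, sub_dotProduct,
    show ∀ (M : Matrix (Fin n) (Fin n) ℝ) (p q : Fin n → ℝ), (M *ᵥ q) ⬝ᵥ p = p ⬝ᵥ (M *ᵥ q)
      from fun M p q => dotProduct_comm _ _]
  linear_combination (1/2) * hsw

set_option maxHeartbeats 2000000 in
/-- recursion inequality (18) in Theorem 3. -/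
theorem msm_recursion_inequality_thm3 {n : ℕ} (hn : 0 < n)
    (A : Matrix (Fin n) (Fin n) ℝ) (hA : A.IsSymm) (b : E n) (h : E n → ℝ)
    (ω θ : ℝ) (hω : ω ∈ Set.Ioo (0 : ℝ) 2) (hθ : 0 ≤ θ)
    (δ : ℝ) (hδ : δ = 2 * θ / ω + (2 - ω) / ω * ⨅ i, A i i) (hδpos : 0 < δ)
    (xstar : E n) (hxstar : ∀ y : E n, fObj A b h xstar ≤ fObj A b h y)
    (x z : E n) (hz : IsTriangleProx ω θ A b h x z)
    (R : ℝ) (hR : 0 < R) (hxR : ‖x‖ ≤ R) (hxstarR : ‖xstar‖ ≤ R)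
    (η : ℝ) (hη : 0 < η) (herr : ‖x - xstar‖ ≤ η * ‖x - z‖)
    (C₃ C₄ : ℝ)
    (hC₃ : C₃ = 2 * R * opNorm (Cmat ω θ A) * Real.sqrt (2 / δ))
    (hC₄ : C₄ = (2 / δ) * (opNorm (Cmat ω θ A) + (η ^ 2 + 1) * opNorm A)) :
    fObj A b h z - fObj A b h xstar
      ≤ C₃ * Real.sqrt (fObj A b h x - fObj A b h z)
        + C₄ * (fObj A b h x - fObj A b h z) := by
  obtain ⟨v, hsub, heq⟩ := hz
  obtain ⟨hω0, hω2⟩ := hω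
  set Bm := Bmat ω θ A with hBm
  set Cm := Cmat ω θ A with hCm
  have hBC : Bm + Cm = A := BC_sum A hA θ (ne_of_gt hω0)
  set ev : E n → (Fin n → ℝ) := fun p => (WithLp.equiv 2 (Fin n → ℝ)) p with hev
  set x' := ev x with hx'
  set z' := ev z with hz'
  set u' := ev xstar with hu'
  set b' := ev b with hb'
  set v' := ev v with hv'
  have fdiff : ∀ p : E n,
      fObj A b h p = (1/2) * ((ev p) ⬝ᵥ (A *ᵥ (ev p))) + b' ⬝ᵥ (ev p) + h p := by
    intro p
    rw [fObj, inner_mulVecE, inner_dot]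
  have heq' : Bm *ᵥ z' + b' + Cm *ᵥ x' + v' = 0 := by
    have := congrArg (fun p : E n => (WithLp.equiv 2 (Fin n → ℝ)) p) heq
    exact this
  have hv2 : v' = -(Bm *ᵥ z' + b' + Cm *ᵥ x') := by
    have := eq_neg_of_add_eq_zero_right heq'
    rw [this]
  -- subgradient inequalities in dot-product form
  have hsx : h z + v' ⬝ᵥ (x' - z') ≤ h x := by
    have := hsub x
    rwa [inner_dot, WithLp_equiv_sub] at this
  have hsu : h z + v' ⬝ᵥ (u' - z') ≤ h xstar := by
    have := hsub xstar
    rwa [inner_dot, WithLp_equiv_sub] at this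
  -- Step 1 : sufficient decrease
  have swap1 : z' ⬝ᵥ (Bm *ᵥ x') + z' ⬝ᵥ (Cm *ᵥ x') = x' ⬝ᵥ (Bm *ᵥ z') + x' ⬝ᵥ (Cm *ᵥ z') := by
    have hs := swapA A hA z' x'
    rw [← hBC, Matrix.add_mulVec, dotProduct_add, Matrix.add_mulVec, dotProduct_add] at hs
    exact hs
  have hid1 := id1 Bm Cm x' z' b' swap1
  rw [hBC] at hid1
  have hq := qf_lb hn A ⟨hω0, hω2⟩ hδ (x' - z')
  have hnorm1 : ‖x - z‖^2 = (x' - z') ⬝ᵥ (x' - z') := by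
    rw [← real_inner_self_eq_norm_sq, inner_dot, WithLp_equiv_sub]
  have hveq : v' ⬝ᵥ (x' - z') = -((Bm *ᵥ z' + b' + Cm *ᵥ x') ⬝ᵥ (x' - z')) := by
    rw [hv2, neg_dotProduct]
  have key1 : δ * ‖x - z‖^2 ≤ 2 * (fObj A b h x - fObj A b h z) := by
    have e1 : fObj A b h x - fObj A b h z
        ≥ (1/2) * (x' ⬝ᵥ (A *ᵥ x')) - (1/2) * (z' ⬝ᵥ (A *ᵥ z')) + b' ⬝ᵥ (x' - z')
          + v' ⬝ᵥ (x' - z') := by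
      rw [fdiff x, fdiff z, dotProduct_sub]
      linarith only [hsx]
    rw [hveq] at e1
    rw [hnorm1]
    linarith only [e1, hid1, hq]
  set Δ := fObj A b h x - fObj A b h z with hΔ
  have hΔ0 : 0 ≤ Δ := by
    have hnn : 0 ≤ δ * ‖x - z‖^2 := mul_nonneg hδpos.le (sq_nonneg _)
    linarith only [key1, hnn]
  set t := ‖x - z‖ with htdef
  have ht0 : 0 ≤ t := norm_nonneg _
  have ht2 : t^2 ≤ 2/δ * Δ := by
    rw [div_mul_eq_mul_div, le_div_iff₀ hδpos]
    calc t^2 * δ = δ * t^2 := mul_comm _ _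
      _ ≤ 2 * Δ := key1
  have ht : t ≤ Real.sqrt (2/δ) * Real.sqrt Δ := by
    have h1 : t = Real.sqrt (t^2) := (Real.sqrt_sq ht0).symm
    rw [h1, ← Real.sqrt_mul (by positivity : (0:ℝ) ≤ 2/δ)]
    exact Real.sqrt_le_sqrt ht2
  -- Step 2 : optimality gap bound
  have swap2 : u' ⬝ᵥ (Bm *ᵥ z') + u' ⬝ᵥ (Cm *ᵥ z') = z' ⬝ᵥ (Bm *ᵥ u') + z' ⬝ᵥ (Cm *ᵥ u') := by
    have hs := swapA A hA u' z'
    rw [← hBC, Matrix.add_mulVec, dotProduct_add, Matrix.add_mulVec, dotProduct_add] at hs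
    exact hs
  have hid2 := id2 Bm Cm x' z' u' b' swap2
  rw [hBC] at hid2
  have hterm1 : (Cm *ᵥ (z' - x')) ⬝ᵥ (z' - u') = ⟪mulVecE Cm (z - x), z - xstar⟫ := by
    rw [inner_dot, mulVecE, Equiv.apply_symm_apply, WithLp_equiv_sub, WithLp_equiv_sub]
  have hterm2 : (u' - z') ⬝ᵥ (A *ᵥ (u' - z')) = ⟪xstar - z, mulVecE A (xstar - z)⟫ := by
    rw [inner_mulVecE, WithLp_equiv_sub]
  have gap1 : fObj A b h z - fObj A b h xstar
      ≤ ⟪mulVecE Cm (z - x), z - xstar⟫ - (1/2) * ⟪xstar - z, mulVecE A (xstar - z)⟫ := by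
    have e2 : fObj A b h z - fObj A b h xstar
        ≤ (1/2) * (z' ⬝ᵥ (A *ᵥ z')) - (1/2) * (u' ⬝ᵥ (A *ᵥ u')) + b' ⬝ᵥ (z' - u')
          + (Bm *ᵥ z' + b' + Cm *ᵥ x') ⬝ᵥ (u' - z') := by
      rw [fdiff z, fdiff xstar, dotProduct_sub]
      have hveq2 : v' ⬝ᵥ (u' - z') = -((Bm *ᵥ z' + b' + Cm *ᵥ x') ⬝ᵥ (u' - z')) := by
        rw [hv2, neg_dotProduct]
      rw [hveq2] at hsu
      linarith [hsu]
    rw [hid2, hterm1, hterm2] at e2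
    exact e2
  -- bounds on the two terms
  set opC := opNorm Cm with hopC
  set opA := opNorm A with hopA
  have hopC0 : 0 ≤ opC := norm_nonneg _
  have hopA0 : 0 ≤ opA := norm_nonneg _
  have hnormC : ‖mulVecE Cm (z - x)‖ ≤ opC * t := by
    have := norm_mulVecE_le Cm (z - x)
    rwa [norm_sub_rev] at this
  have h2R : ‖x - xstar‖ ≤ 2 * R := by
    calc ‖x - xstar‖ ≤ ‖x‖ + ‖xstar‖ := norm_sub_le _ _
      _ ≤ 2 * R := by linarith
  have hsplit : (z : E n) - xstar = (z - x) + (x - xstar) := by abel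
  have hb1 : ⟪mulVecE Cm (z - x), z - xstar⟫ ≤ opC * t^2 + opC * t * (2*R) := by
    rw [hsplit, inner_add_right]
    have i1 : ⟪mulVecE Cm (z - x), z - x⟫ ≤ opC * t * t := by
      calc ⟪mulVecE Cm (z - x), z - x⟫ ≤ ‖mulVecE Cm (z - x)‖ * ‖z - x‖ := real_inner_le_norm _ _
        _ ≤ opC * t * t := by
            rw [norm_sub_rev z x]
            exact mul_le_mul_of_nonneg_right hnormC ht0
    have i2 : ⟪mulVecE Cm (z - x), x - xstar⟫ ≤ (opC * t) * (2*R) := by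
      calc ⟪mulVecE Cm (z - x), x - xstar⟫
          ≤ ‖mulVecE Cm (z - x)‖ * ‖x - xstar‖ := real_inner_le_norm _ _
        _ ≤ (opC * t) * (2*R) := by
            apply mul_le_mul hnormC h2R (norm_nonneg _) (by positivity)
    linarith only [i1, i2]
  have hz2 : ‖xstar - z‖ ≤ (η + 1) * t := by
    have hs2 : (xstar : E n) - z = (xstar - x) + (x - z) := by abel
    calc ‖xstar - z‖ = ‖(xstar - x) + (x - z)‖ := by rw [hs2]
      _ ≤ ‖xstar - x‖ + ‖x - z‖ := norm_add_le _ _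
      _ ≤ η * t + t := by
          rw [norm_sub_rev]
          exact add_le_add herr le_rfl
      _ = (η + 1) * t := by ring
  have hb2 : -(1/2) * ⟪xstar - z, mulVecE A (xstar - z)⟫ ≤ (η^2 + 1) * opA * t^2 := by
    have habs : |⟪xstar - z, mulVecE A (xstar - z)⟫| ≤ ‖xstar - z‖ * (opA * ‖xstar - z‖) := by
      calc |⟪xstar - z, mulVecE A (xstar - z)⟫|
          ≤ ‖xstar - z‖ * ‖mulVecE A (xstar - z)‖ := abs_real_inner_le_norm _ _
        _ ≤ ‖xstar - z‖ * (opA * ‖xstar - z‖) :=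
            mul_le_mul_of_nonneg_left (norm_mulVecE_le _ _) (norm_nonneg _)
    have hneg : -(‖xstar - z‖ * (opA * ‖xstar - z‖)) ≤ ⟪xstar - z, mulVecE A (xstar - z)⟫ := by
      have := neg_abs_le ⟪xstar - z, mulVecE A (xstar - z)⟫
      linarith
    have hzz : ‖xstar - z‖^2 ≤ 2 * (η^2 + 1) * t^2 := by
      have e := mul_self_le_mul_self (norm_nonneg (xstar - z)) hz2
      have e2 : 0 ≤ (η - 1)^2 * t^2 := by positivity
      have e3 : ‖xstar - z‖^2 = ‖xstar - z‖ * ‖xstar - z‖ := sq ‖xstar - z‖ ▸ sq ‖xstar - z‖ ▸ (sq ‖xstar - z‖).symm ▸ rfl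
      nlinarith only [e, e2]
    linarith only [hneg, mul_le_mul_of_nonneg_left hzz hopA0]
  -- combine
  have gap2 : fObj A b h z - fObj A b h xstar
      ≤ 2 * R * opC * t + (opC + (η^2 + 1) * opA) * t^2 := by
    linarith only [gap1, hb1, hb2]
  have final1 : 2 * R * opC * t ≤ C₃ * Real.sqrt Δ := by
    rw [hC₃]
    calc 2 * R * opC * t ≤ 2 * R * opC * (Real.sqrt (2/δ) * Real.sqrt Δ) := by
          apply mul_le_mul_of_nonneg_left ht (by positivity)
      _ = 2 * R * opC * Real.sqrt (2/δ) * Real.sqrt Δ := by ring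
  have final2 : (opC + (η^2 + 1) * opA) * t^2 ≤ C₄ * Δ := by
    rw [hC₄]
    calc (opC + (η^2 + 1) * opA) * t^2 ≤ (opC + (η^2 + 1) * opA) * (2/δ * Δ) := by
          apply mul_le_mul_of_nonneg_left ht2 (by positivity)
      _ = 2/δ * (opC + (η^2 + 1) * opA) * Δ := by ring
  calc fObj A b h z - fObj A b h xstar
      ≤ 2 * R * opC * t + (opC + (η^2 + 1) * opA) * t^2 := gap2
    _ ≤ C₃ * Real.sqrt Δ + C₄ * Δ := add_le_add final1 final2
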